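/- For a binary rooted labeled tree S with n leaves, the maximal chains of the lattice of root ancestral configurations of S are in bijection with the labeled histories of S, i.e., the linear extensions of the partial order on the n−1 internal nodes of S given by the ancestor relation. -/

import Mathlib

/-- Binary rooted trees (leaf labels abstracted away; leaves are identified
by their positions, encoded as lists of booleans). -/
inductive BTree : Type
  | leaf : BTree
  | node : BTree → BTree → BTree
  deriving DecidableEq

namespace BTree

/-- A position in a binary tree: a path from the root, `false` = left, `true` = right. -/
abbrev Pos := List Bool

/-- The subtree rooted at a position (junk value `leaf` below a leaf). -/
def subtreeAt : BTree → Pos → BTree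
  | t, [] => t
  | leaf, _ :: _ => leaf
  | node l _, false :: p => subtreeAt l p
  | node _ r, true :: p => subtreeAt r p

/-- `p` is a valid position (node) of the tree. -/
def isValidPos : BTree → Pos → Prop
  | _, [] => True
  | leaf, _ :: _ => False
  | node l _, false :: p => isValidPos l p
  | node _ r, true :: p => isValidPos r p

/-- The set of positions of the leaves of a tree. -/
def leafPositions : BTree → Finset Pos
  | leaf => {([] : Pos)}
  | node l r =>
      (leafPositions l).image (false :: ·) ∪ (leafPositions r).image (true :: ·)

/-- The number of leaves of a tree. -/
def numLeaves (t : BTree) : ℕ := (leafPositions t).card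

/-- The set of positions of the internal (non-leaf) nodes of a tree. -/
def internalPos : BTree → Finset Pos
  | leaf => ∅
  | node l r =>
      insert ([] : Pos)
        ((internalPos l).image (false :: ·) ∪ (internalPos r).image (true :: ·))

/-- A root ancestral configuration of `S`: an antichain of non-root nodes of `S`
whose descendant-leaf sets partition the leaf set, i.e. a set of valid non-root
positions such that every leaf position has exactly one weak ancestor in the set. -/
def IsConfig (S : BTree) (A : Finset Pos) : Prop :=
  (∀ p ∈ A, isValidPos S p ∧ p ≠ []) ∧
  ∀ q ∈ leafPositions S, ∃! p, p ∈ A ∧ p <+: q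

/-- The partial order on configurations: `ConfigLE A B` (that is, `A ≺ B`) iff `B`
is obtained from `A` by coalescing some (possibly no) pairs of lineages;
equivalently, every node of `A` is a weak descendant of some node of `B`. -/
def ConfigLE (A B : Finset Pos) : Prop :=
  ∀ p ∈ A, ∃ q ∈ B, q <+: p

/-- The covering relation on root ancestral configurations of `S`. -/
def Covers (S : BTree) (A B : Finset Pos) : Prop :=
  IsConfig S A ∧ IsConfig S B ∧ ConfigLE A B ∧ A ≠ B ∧
  ∀ C, IsConfig S C → ConfigLE A C → ConfigLE C B → C = A ∨ C = B

/-- The maximal root configuration: the two children of the root. -/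
def rootConfig : Finset Pos := {[false], [true]}

/-- The number of root ancestral configurations of `S`. -/
noncomputable def numConfigs (S : BTree) : ℕ := Nat.card {A : Finset Pos // IsConfig S A}

/-- A labeled history of `S`: a linear ordering of the internal nodes of `S`
in which every internal node appears after all of its internal descendants. -/
def IsLabHist (S : BTree) (L : List Pos) : Prop :=
  L.Nodup ∧ (∀ p, p ∈ L ↔ p ∈ internalPos S) ∧
  ∀ i j : Fin L.length, L.get i <+: L.get j → (j : ℕ) ≤ (i : ℕ)

/-- The number of labeled histories of `S`. -/
noncomputable def numHist (S : BTree) : ℕ := Nat.card {L : List Pos // IsLabHist S L}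

/-- The caterpillar tree on `n` leaves (`caterpillar 1` is a single leaf). -/
def caterpillar : ℕ → BTree
  | 0 => leaf
  | 1 => leaf
  | n + 2 => node (caterpillar (n + 1)) leaf

end BTree

namespace BTree

/-! ### List prefix helpers -/

theorem prefix_antisymm {p q : Pos} (h1 : p <+: q) (h2 : q <+: p) : p = q :=
  h1.eq_of_length_le h2.length_le

theorem exists_snoc_prefix {p q : Pos} (h : p <+: q) (hne : p ≠ q) :
    ∃ b, p ++ [b] <+: q := by
  obtain ⟨t, rfl⟩ := h
  cases t with
  | nil => exact absurd (by simp) hne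
  | cons b t => exact ⟨b, ⟨t, by simp⟩⟩

theorem prefix_snoc {p q : Pos} {b : Bool} (h : p <+: q ++ [b]) :
    p = q ++ [b] ∨ p <+: q := by
  rcases Nat.lt_or_ge p.length (q ++ [b]).length with h1 | h1
  · right
    refine List.prefix_of_prefix_length_le h (List.prefix_append q [b]) ?_
    simp at h1 ⊢; omega
  · left; exact h.eq_of_length_le h1

theorem prefix_strict_snoc {p q : Pos} (h : p <+: q) (hne : p ≠ q) :
    p <+: q.dropLast := by
  have hq : q ≠ [] := by
    rintro rfl; exact hne (List.prefix_nil.mp h)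
  have := List.dropLast_append_getLast hq
  rw [← this] at h
  rcases prefix_snoc h with h1 | h1
  · rw [this] at h1; exact absurd h1 hne
  · exact h1

theorem subtreeAt_leaf (p : Pos) : subtreeAt leaf p = leaf := by
  cases p <;> rfl

theorem subtreeAt_append (S : BTree) (p q : Pos) :
    subtreeAt S (p ++ q) = subtreeAt (subtreeAt S p) q := by
  induction p generalizing S with
  | nil => simp [subtreeAt]
  | cons b p ih =>
    cases S with
    | leaf => simp [subtreeAt, subtreeAt_leaf]
    | node l r => cases b <;> simp [subtreeAt, ih]

theorem isValidPos_nil (S : BTree) : isValidPos S [] := by cases S <;> trivial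

theorem valid_append_left {S : BTree} {p q : Pos} (h : isValidPos S (p ++ q)) :
    isValidPos S p := by
  induction p generalizing S with
  | nil => exact isValidPos_nil S
  | cons b p ih =>
    cases S with
    | leaf => exact absurd h (by simp [isValidPos])
    | node l r => cases b <;> exact ih h

theorem valid_of_prefix {S : BTree} {p q : Pos} (hq : isValidPos S q) (h : p <+: q) :
    isValidPos S p := by
  obtain ⟨t, rfl⟩ := h; exact valid_append_left hq

theorem valid_snoc_iff {S : BTree} {p : Pos} {b : Bool} :
    isValidPos S (p ++ [b]) ↔ ∃ a c, subtreeAt S p = node a c := by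
  induction p generalizing S with
  | nil =>
    cases S with
    | leaf =>
      simp only [List.nil_append, subtreeAt]
      constructor
      · intro h; exact absurd h (by cases b <;> simp [isValidPos])
      · rintro ⟨a, c, h⟩; exact absurd h (by simp)
    | node l r =>
      simp only [List.nil_append, subtreeAt]
      constructor
      · intro _; exact ⟨l, r, rfl⟩
      · intro _; cases b <;> exact isValidPos_nil _
  | cons x p ih =>
    cases S with
    | leaf =>
      constructor
      · intro h; exact absurd h (by simp [isValidPos])
      · rintro ⟨a, c, h⟩; rw [subtreeAt_leaf] at h; exact absurd h (by simp)
    | node l r =>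
      cases x
      · simpa [isValidPos, subtreeAt] using ih (S := l)
      · simpa [isValidPos, subtreeAt] using ih (S := r)

theorem mem_internalPos_iff {S : BTree} {p : Pos} :
    p ∈ internalPos S ↔ isValidPos S p ∧ ∃ a c, subtreeAt S p = node a c := by
  induction S generalizing p with
  | leaf =>
    simp only [internalPos, Finset.notMem_empty, false_iff, not_and, subtreeAt_leaf]
    intro _; simp
  | node l r ihl ihr =>
    cases p with
    | nil =>
      simp [internalPos, subtreeAt, isValidPos_nil]
    | cons b p =>
      cases b with
      | false =>
        simp only [internalPos, Finset.mem_insert, Finset.mem_union, Finset.mem_image,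
          subtreeAt, isValidPos]
        rw [← ihl]
        constructor
        · rintro (h | ⟨a, ha, he⟩ | ⟨a, ha, he⟩)
          · exact absurd h (by simp)
          · simp at he; rwa [← he]
          · simp at he
        · intro h; right; left; exact ⟨p, h, rfl⟩
      | true =>
        simp only [internalPos, Finset.mem_insert, Finset.mem_union, Finset.mem_image,
          subtreeAt, isValidPos]
        rw [← ihr]
        constructor
        · rintro (h | ⟨a, ha, he⟩ | ⟨a, ha, he⟩)
          · exact absurd h (by simp)
          · simp at he
          · simp at he; rwa [← he]
        · intro h; right; right; exact ⟨p, h, rfl⟩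

theorem mem_leafPositions_iff {S : BTree} {q : Pos} :
    q ∈ leafPositions S ↔ isValidPos S q ∧ subtreeAt S q = leaf := by
  induction S generalizing q with
  | leaf =>
    cases q with
    | nil => simp [leafPositions, subtreeAt, isValidPos_nil]
    | cons b q => simp [leafPositions, subtreeAt, isValidPos]
  | node l r ihl ihr =>
    cases q with
    | nil =>
      simp only [leafPositions, Finset.mem_union, Finset.mem_image, subtreeAt]
      constructor
      · rintro (⟨a, _, h⟩ | ⟨a, _, h⟩) <;> simp at h
      · rintro ⟨_, h⟩; exact absurd h (by simp)
    | cons b q =>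
      simp only [leafPositions, Finset.mem_union, Finset.mem_image]
      cases b with
      | false =>
        simp only [subtreeAt, isValidPos]
        rw [← ihl]
        constructor
        · rintro (⟨a, ha, he⟩ | ⟨a, ha, he⟩) <;> simp at he
          rwa [← he]
        · intro h; left; exact ⟨q, h, rfl⟩
      | true =>
        simp only [subtreeAt, isValidPos]
        rw [← ihr]
        constructor
        · rintro (⟨a, ha, he⟩ | ⟨a, ha, he⟩) <;> simp at he
          rwa [← he]
        · intro h; right; exact ⟨q, h, rfl⟩

theorem leafPositions_nonempty (S : BTree) : (leafPositions S).Nonempty := by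
  induction S with
  | leaf => exact ⟨[], by simp [leafPositions]⟩
  | node l r ihl ihr =>
    obtain ⟨q, hq⟩ := ihl
    refine ⟨false :: q, ?_⟩
    simp only [leafPositions, Finset.mem_union, Finset.mem_image]
    exact Or.inl ⟨q, hq, rfl⟩

theorem exists_leaf_ext {S : BTree} {p : Pos} (h : isValidPos S p) :
    ∃ q ∈ leafPositions S, p <+: q := by
  induction p generalizing S with
  | nil =>
    obtain ⟨q, hq⟩ := leafPositions_nonempty S
    exact ⟨q, hq, List.nil_prefix⟩
  | cons b p ih =>
    cases S with
    | leaf => exact absurd h (by simp [isValidPos])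
    | node l r =>
      cases b with
      | false =>
        obtain ⟨q, hq, hpq⟩ := ih (S := l) h
        refine ⟨false :: q, ?_, List.cons_prefix_cons.mpr ⟨rfl, hpq⟩⟩
        simp only [leafPositions, Finset.mem_union, Finset.mem_image]
        exact Or.inl ⟨q, hq, rfl⟩
      | true =>
        obtain ⟨q, hq, hpq⟩ := ih (S := r) h
        refine ⟨true :: q, ?_, List.cons_prefix_cons.mpr ⟨rfl, hpq⟩⟩
        simp only [leafPositions, Finset.mem_union, Finset.mem_image]
        exact Or.inr ⟨q, hq, rfl⟩

theorem leaf_eq_of_prefix {S : BTree} {q q' : Pos} (h : q ∈ leafPositions S)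
    (hv : isValidPos S q') (hpre : q <+: q') : q = q' := by
  by_contra hne
  obtain ⟨b, hb⟩ := exists_snoc_prefix hpre hne
  have hval : isValidPos S (q ++ [b]) := valid_of_prefix hv hb
  obtain ⟨a, c, hac⟩ := valid_snoc_iff.mp hval
  rw [mem_leafPositions_iff] at h
  rw [h.2] at hac
  exact absurd hac (by simp)

theorem internal_not_leafPos {S : BTree} {p : Pos} (h : p ∈ internalPos S) :
    p ∉ leafPositions S := by
  rw [mem_internalPos_iff] at h
  rw [mem_leafPositions_iff]
  obtain ⟨_, a, c, hac⟩ := h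
  rintro ⟨_, h2⟩; rw [h2] at hac; exact absurd hac (by simp)

theorem leafPos_of_valid_not_internal {S : BTree} {p : Pos} (hv : isValidPos S p)
    (h : p ∉ internalPos S) : p ∈ leafPositions S := by
  rw [mem_internalPos_iff] at h
  rw [mem_leafPositions_iff]
  refine ⟨hv, ?_⟩
  cases hs : subtreeAt S p with
  | leaf => rfl
  | node a c => exact absurd ⟨hv, a, c, hs⟩ h

theorem nil_not_mem_leafPositions {l r : BTree} : ([] : Pos) ∉ leafPositions (node l r) := by
  simp only [leafPositions, Finset.mem_union, Finset.mem_image]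
  rintro (⟨a, _, h⟩ | ⟨a, _, h⟩) <;> simp at h

theorem nil_mem_internalPos {l r : BTree} : ([] : Pos) ∈ internalPos (node l r) := by
  simp [internalPos]

theorem valid_of_mem_internalPos {S : BTree} {p : Pos} (h : p ∈ internalPos S) :
    isValidPos S p := (mem_internalPos_iff.mp h).1

theorem internal_of_snoc_valid {S : BTree} {p : Pos} {b : Bool}
    (h : isValidPos S (p ++ [b])) : p ∈ internalPos S :=
  mem_internalPos_iff.mpr ⟨valid_append_left h, valid_snoc_iff.mp h⟩

theorem snoc_valid_of_internal {S : BTree} {p : Pos} (h : p ∈ internalPos S) (b : Bool) :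
    isValidPos S (p ++ [b]) := by
  rw [mem_internalPos_iff] at h
  exact valid_snoc_iff.mpr h.2

end BTree


set_option linter.unusedSectionVars false

namespace BTree

/-! ### Configurations and coalescence -/

theorem config_antichain {S : BTree} {A : Finset Pos} (hA : IsConfig S A)
    {p p' : Pos} (hp : p ∈ A) (hp' : p' ∈ A) (hpre : p <+: p') : p = p' := by
  obtain ⟨hq', _⟩ := hA.1 p' hp'
  obtain ⟨q, hq, hpq⟩ := exists_leaf_ext hq'
  obtain ⟨a, _, hu⟩ := hA.2 q hq
  have h1 := hu p ⟨hp, hpre.trans hpq⟩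
  have h2 := hu p' ⟨hp', hpq⟩
  rw [h1, h2]

theorem not_mem_of_child_mem {S : BTree} {A : Finset Pos} (hA : IsConfig S A)
    {p : Pos} {b : Bool} (h : p ++ [b] ∈ A) : p ∉ A := by
  intro hp
  have := config_antichain hA hp h (List.prefix_append p [b])
  simp at this

/-- Coalescing the two children of `p` into `p`. -/
def coalesce (A : Finset Pos) (p : Pos) : Finset Pos :=
  insert p ((A.erase (p ++ [false])).erase (p ++ [true]))

theorem mem_coalesce {A : Finset Pos} {p x : Pos} :
    x ∈ coalesce A p ↔ x = p ∨ (x ∈ A ∧ x ≠ p ++ [false] ∧ x ≠ p ++ [true]) := by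
  simp only [coalesce, Finset.mem_insert, Finset.mem_erase]
  tauto

theorem mem_coalesce_self {A : Finset Pos} {p : Pos} : p ∈ coalesce A p :=
  Finset.mem_insert_self _ _

section Coalesce

variable {S : BTree} {A : Finset Pos} {p : Pos}
  (hA : IsConfig S A) (hp : p ≠ [])
  (h0 : p ++ [false] ∈ A) (h1 : p ++ [true] ∈ A)

include hA h0 h1

theorem coalesce_not_mem_base : p ∉ A := not_mem_of_child_mem hA h0

theorem coalesce_internal : p ∈ internalPos S :=
  internal_of_snoc_valid (hA.1 _ h0).1

include hp

theorem isConfig_coalesce : IsConfig S (coalesce A p) := by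
  constructor
  · intro x hx
    rcases mem_coalesce.mp hx with rfl | ⟨hxA, _, _⟩
    · exact ⟨valid_of_mem_internalPos (coalesce_internal hA h0 h1), hp⟩
    · exact hA.1 x hxA
  · intro q hq
    obtain ⟨a, ⟨haA, haq⟩, hu⟩ := hA.2 q hq
    have hqp : p ≠ q := by
      intro h
      subst h
      exact internal_not_leafPos (coalesce_internal hA h0 h1) hq
    by_cases hch : a = p ++ [false] ∨ a = p ++ [true]
    · -- the unique element is p
      have hpq : p <+: q := by
        rcases hch with rfl | rfl
        · exact (List.prefix_append p [false]).trans haq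
        · exact (List.prefix_append p [true]).trans haq
      refine ⟨p, ⟨mem_coalesce_self, hpq⟩, ?_⟩
      rintro x ⟨hx, hxq⟩
      rcases mem_coalesce.mp hx with rfl | ⟨hxA, hx0, hx1⟩
      · rfl
      · have := hu x ⟨hxA, hxq⟩
        subst this
        rcases hch with h | h <;> [exact absurd h hx0; exact absurd h hx1]
    · push_neg at hch
      refine ⟨a, ⟨mem_coalesce.mpr (Or.inr ⟨haA, hch.1, hch.2⟩), haq⟩, ?_⟩
      rintro x ⟨hx, hxq⟩
      rcases mem_coalesce.mp hx with hxp | ⟨hxA, _, _⟩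
      · -- x = p: impossible since then a child of p would also cover q
        rw [hxp] at hxq ⊢
        obtain ⟨b, hb⟩ := exists_snoc_prefix hxq hqp
        have : p ++ [b] = a := by
          apply hu
          cases b
          · exact ⟨h0, hb⟩
          · exact ⟨h1, hb⟩
        exact absurd this.symm (by cases b; exacts [hch.1, hch.2])
      · exact hu x ⟨hxA, hxq⟩

theorem configLE_coalesce : ConfigLE A (coalesce A p) := by
  intro x hx
  by_cases hch : x = p ++ [false] ∨ x = p ++ [true]
  · exact ⟨p, mem_coalesce_self, by rcases hch with rfl | rfl <;> exact List.prefix_append _ _⟩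
  · push_neg at hch
    exact ⟨x, mem_coalesce.mpr (Or.inr ⟨hx, hch.1, hch.2⟩), List.prefix_refl x⟩

theorem coalesce_covers : Covers S A (coalesce A p) := by
  have hconf := isConfig_coalesce hA hp h0 h1
  have hpA := coalesce_not_mem_base hA h0 h1
  have hint := coalesce_internal hA h0 h1
  refine ⟨hA, hconf, configLE_coalesce hA hp h0 h1, ?_, ?_⟩
  · intro h; apply hpA; rw [h]; exact mem_coalesce_self
  · intro C hC hAC hCB
    -- key fact (I): every element of A other than the two children is in C
    have keyI : ∀ a ∈ A, a ≠ p ++ [false] → a ≠ p ++ [true] → a ∈ C := by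
      intro a haA ha0 ha1
      obtain ⟨q, hq, haq⟩ := exists_leaf_ext (hA.1 a haA).1
      obtain ⟨b, hbC, hba⟩ := hAC a haA
      obtain ⟨d, hdB, hdb⟩ := hCB b hbC
      have haB : a ∈ coalesce A p := mem_coalesce.mpr (Or.inr ⟨haA, ha0, ha1⟩)
      obtain ⟨e, _, hue⟩ := hconf.2 q hq
      have h1' := hue a ⟨haB, haq⟩
      have h2' := hue d ⟨hdB, hdb.trans (hba.trans haq)⟩
      rw [h2', ← h1'] at hdb
      have : a = b := prefix_antisymm hdb hba
      rwa [this]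
    -- analysis of covers of leaves under the two children
    obtain ⟨q0, hq0, hc0q0⟩ := exists_leaf_ext (hA.1 _ h0).1
    obtain ⟨b0, hb0C, hb0⟩ := hAC _ h0
    have hpq0 : p <+: q0 := (List.prefix_append p [false]).trans hc0q0
    have hb0' : b0 = p ∨ b0 = p ++ [false] := by
      obtain ⟨d, hdB, hdb⟩ := hCB b0 hb0C
      obtain ⟨e, _, hue⟩ := hconf.2 q0 hq0
      have h1' := hue p ⟨mem_coalesce_self, hpq0⟩
      have h2' := hue d ⟨hdB, hdb.trans (hb0.trans hc0q0)⟩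
      rw [← h1'] at h2'
      subst h2'
      rcases prefix_snoc (b := false) hb0 with h | h
      · right; exact h
      · left; exact prefix_antisymm h hdb
    rcases hb0' with hb0p | hb0p
    · -- p ∈ C, so C = coalesce A p
      have hpCmem : p ∈ C := hb0p ▸ hb0C
      right
      apply Finset.ext
      intro x
      constructor
      · intro hxC
        obtain ⟨q, hq, hxq⟩ := exists_leaf_ext (hC.1 x hxC).1
        obtain ⟨a, ⟨haA, haq⟩, _⟩ := hA.2 q hq
        obtain ⟨e, _, hue⟩ := hC.2 q hq
        have hx' := hue x ⟨hxC, hxq⟩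
        by_cases hch : a = p ++ [false] ∨ a = p ++ [true]
        · have hpq : p <+: q := by
            rcases hch with rfl | rfl
            · exact (List.prefix_append p [false]).trans haq
            · exact (List.prefix_append p [true]).trans haq
          have hp' := hue p ⟨hpCmem, hpq⟩
          rw [hx', ← hp']
          exact mem_coalesce_self
        · push_neg at hch
          have ha' := hue a ⟨keyI a haA hch.1 hch.2, haq⟩
          rw [hx', ← ha']
          exact mem_coalesce.mpr (Or.inr ⟨haA, hch.1, hch.2⟩)
      · intro hxB
        rcases mem_coalesce.mp hxB with hxp | ⟨hxA, hx0, hx1⟩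
        · rw [hxp]; exact hpCmem
        · exact keyI x hxA hx0 hx1
    · -- p ++ [false] ∈ C; then also p ++ [true] ∈ C and C = A
      have hc0C : p ++ [false] ∈ C := hb0p ▸ hb0C
      have hpC : p ∉ C := by
        intro hpC
        obtain ⟨e, _, hue⟩ := hC.2 q0 hq0
        have h1' := hue p ⟨hpC, hpq0⟩
        have h2' := hue _ ⟨hc0C, hc0q0⟩
        rw [h1'] at h2'
        exact absurd h2'.symm (by simp)
      obtain ⟨q1, hq1, hc1q1⟩ := exists_leaf_ext (hA.1 _ h1).1
      obtain ⟨b1, hb1C, hb1⟩ := hAC _ h1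
      have hpq1 : p <+: q1 := (List.prefix_append p [true]).trans hc1q1
      have hb1' : b1 = p ++ [true] := by
        obtain ⟨d, hdB, hdb⟩ := hCB b1 hb1C
        obtain ⟨e, _, hue⟩ := hconf.2 q1 hq1
        have h1' := hue p ⟨mem_coalesce_self, hpq1⟩
        have h2' := hue d ⟨hdB, hdb.trans (hb1.trans hc1q1)⟩
        rw [← h1'] at h2'
        subst h2'
        rcases prefix_snoc (b := true) hb1 with h | h
        · exact h
        · exact absurd (prefix_antisymm h hdb ▸ hb1C) hpC
      left
      apply Finset.ext
      intro x
      have hsubA : ∀ a ∈ A, a ∈ C := by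
        intro a haA
        by_cases hch : a = p ++ [false] ∨ a = p ++ [true]
        · rcases hch with hh | hh <;> rw [hh]
          · exact hc0C
          · rw [← hb1']; exact hb1C
        · push_neg at hch
          exact keyI a haA hch.1 hch.2
      constructor
      · intro hxC
        obtain ⟨q, hq, hxq⟩ := exists_leaf_ext (hC.1 x hxC).1
        obtain ⟨a, ⟨haA, haq⟩, _⟩ := hA.2 q hq
        obtain ⟨e, _, hue⟩ := hC.2 q hq
        have hx' := hue x ⟨hxC, hxq⟩
        have ha' := hue a ⟨hsubA a haA, haq⟩
        rw [hx', ← ha']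
        exact haA
      · intro hxA
        exact hsubA x hxA

end Coalesce

end BTree


namespace BTree

theorem exists_mem_sdiff_of_covers {S : BTree} {A B : Finset Pos} (h : Covers S A B) :
    ∃ b ∈ B, b ∉ A := by
  obtain ⟨hA, hB, hLE, hne, _⟩ := h
  by_contra hcon
  push_neg at hcon
  apply hne
  apply Finset.ext
  intro x
  constructor
  · intro hxA
    obtain ⟨q, hq, hxq⟩ := exists_leaf_ext (hA.1 x hxA).1
    obtain ⟨b, hbB, hbx⟩ := hLE x hxA
    obtain ⟨e, _, hue⟩ := hA.2 q hq
    have h1 := hue x ⟨hxA, hxq⟩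
    have h2 := hue b ⟨hcon b hbB, hbx.trans hxq⟩
    rw [h1, ← h2]
    exact hbB
  · exact hcon x

theorem covers_eq_coalesce {S : BTree} {A B : Finset Pos} (h : Covers S A B) :
    ∃ p, p ≠ [] ∧ p ++ [false] ∈ A ∧ p ++ [true] ∈ A ∧ p ∉ A ∧ B = coalesce A p := by
  classical
  obtain ⟨b, hbB, hbA⟩ := exists_mem_sdiff_of_covers h
  obtain ⟨hA, hB, hLE, hne, hmin⟩ := h
  -- the set of elements of A strictly below b
  set D : Finset Pos := A.filter (fun a => b <+: a ∧ a ≠ b) with hD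
  have hDne : D.Nonempty := by
    obtain ⟨q, hq, hbq⟩ := exists_leaf_ext (hB.1 b hbB).1
    obtain ⟨a, ⟨haA, haq⟩, _⟩ := hA.2 q hq
    obtain ⟨b', hb'B, hb'a⟩ := hLE a haA
    obtain ⟨e, _, hue⟩ := hB.2 q hq
    have h1 := hue b ⟨hbB, hbq⟩
    have h2 := hue b' ⟨hb'B, hb'a.trans haq⟩
    rw [← h1] at h2
    subst h2
    refine ⟨a, Finset.mem_filter.mpr ⟨haA, hb'a, ?_⟩⟩
    rintro rfl; exact hbA haA
  obtain ⟨a, haD, hamax⟩ := Finset.exists_max_image D List.length hDne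
  obtain ⟨haA, hba, hab⟩ := Finset.mem_filter.mp haD
  have hane : a ≠ [] := (hA.1 a haA).2
  set p : Pos := a.dropLast with hp
  have hpa : p ++ [a.getLast hane] = a := List.dropLast_append_getLast hane
  have hbp : b <+: p := by
    have := prefix_strict_snoc hba (Ne.symm hab)
    rwa [← hp] at this
  have hplen : a.length = p.length + 1 := by rw [← hpa]; simp
  -- the sibling is also in A
  have hsib : p ++ [!(a.getLast hane)] ∈ A := by
    have hsv : isValidPos S (p ++ [!(a.getLast hane)]) := by
      rw [valid_snoc_iff]
      exact valid_snoc_iff.mp (hpa ▸ (hA.1 a haA).1)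
    obtain ⟨q1, hq1, hsq1⟩ := exists_leaf_ext hsv
    obtain ⟨a', ⟨ha'A, ha'q1⟩, _⟩ := hA.2 q1 hq1
    rcases List.prefix_or_prefix_of_prefix ha'q1 hsq1 with hc | hc
    · rcases prefix_snoc hc with he | he
      · exact he ▸ ha'A
      · exfalso
        have ha'a : a' <+: a := by
          rw [← hpa]; exact he.trans (List.prefix_append p _)
        have := config_antichain hA ha'A haA ha'a
        rw [this] at he
        have := he.length_le
        omega
    · have ha'D : a' ∈ D := by
        refine Finset.mem_filter.mpr
          ⟨ha'A, (hbp.trans (List.prefix_append p _)).trans hc, ?_⟩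
        rintro rfl; exact hbA ha'A
      have hlen := hamax a' ha'D
      have heq : p ++ [!(a.getLast hane)] = a' := by
        apply hc.eq_of_length_le
        have : (p ++ [!(a.getLast hane)]).length = p.length + 1 := by simp
        omega
      rwa [heq]
  have hpne : p ≠ [] := by
    intro hpnil
    rw [hpnil] at hbp
    exact (hB.1 b hbB).2 (List.prefix_nil.mp hbp)
  have hch : p ++ [false] ∈ A ∧ p ++ [true] ∈ A := by
    obtain hdd | hdd := Bool.eq_false_or_eq_true (a.getLast hane)
    · rw [hdd] at hpa hsib
      exact ⟨by simpa using hsib, hpa ▸ haA⟩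
    · rw [hdd] at hpa hsib
      exact ⟨hpa ▸ haA, by simpa using hsib⟩
  have hpA : p ∉ A := not_mem_of_child_mem hA hch.1
  refine ⟨p, hpne, hch.1, hch.2, hpA, ?_⟩
  have hLE2 : ConfigLE (coalesce A p) B := by
    intro x hx
    rcases mem_coalesce.mp hx with hxp | ⟨hxA, _, _⟩
    · exact ⟨b, hbB, by rw [hxp]; exact hbp⟩
    · exact hLE x hxA
  rcases hmin (coalesce A p) (isConfig_coalesce hA hpne hch.1 hch.2)
      (configLE_coalesce hA hpne hch.1 hch.2) hLE2 with he | he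
  · exact absurd (he ▸ mem_coalesce_self) hpA
  · exact he.symm

/-- The element coalesced in a covering step. -/
noncomputable def delta (A B : Finset Pos) : Pos := (B \ A).toList.headI

theorem coalesce_sdiff {A : Finset Pos} {p : Pos} (hpA : p ∉ A) :
    coalesce A p \ A = {p} := by
  apply Finset.ext
  intro x
  simp only [Finset.mem_sdiff, Finset.mem_singleton]
  constructor
  · rintro ⟨hx, hxA⟩
    rcases mem_coalesce.mp hx with h | ⟨h, _, _⟩
    · exact h
    · exact absurd h hxA
  · rintro rfl
    exact ⟨mem_coalesce_self, hpA⟩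

theorem delta_coalesce {A : Finset Pos} {p : Pos} (hpA : p ∉ A) :
    delta A (coalesce A p) = p := by
  rw [delta, coalesce_sdiff hpA, Finset.toList_singleton]
  rfl

theorem coalesce_delta_of_covers {S : BTree} {A B : Finset Pos} (h : Covers S A B) :
    coalesce A (delta A B) = B ∧ delta A B ≠ [] ∧
      delta A B ++ [false] ∈ A ∧ delta A B ++ [true] ∈ A ∧ delta A B ∉ A := by
  obtain ⟨p, hpne, h0, h1, hpA, rfl⟩ := covers_eq_coalesce h
  rw [delta_coalesce hpA]
  exact ⟨rfl, hpne, h0, h1, hpA⟩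

end BTree


namespace BTree

/-- The frontier of a set `C` of coalesced internal nodes: all positions that are
leaves or coalesced, and whose parent is not coalesced. -/
def frontier (S : BTree) (C : Finset Pos) : Finset Pos :=
  (leafPositions S ∪ C).filter (fun p => p.dropLast ∉ C)

theorem mem_frontier {S : BTree} {C : Finset Pos} {x : Pos} :
    x ∈ frontier S C ↔ (x ∈ leafPositions S ∨ x ∈ C) ∧ x.dropLast ∉ C := by
  simp [frontier]

theorem frontier_empty (S : BTree) : frontier S ∅ = leafPositions S := by
  apply Finset.ext; intro x; simp [mem_frontier]

theorem isConfig_leafPositions (l r : BTree) :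
    IsConfig (node l r) (leafPositions (node l r)) := by
  constructor
  · intro p hp
    exact ⟨(mem_leafPositions_iff.mp hp).1, fun h => nil_not_mem_leafPositions (h ▸ hp)⟩
  · intro q hq
    refine ⟨q, ⟨hq, List.prefix_refl q⟩, ?_⟩
    rintro x ⟨hx, hxq⟩
    exact leaf_eq_of_prefix hx (mem_leafPositions_iff.mp hq).1 hxq

theorem descend_closed {S : BTree} {D : Finset Pos}
    (hcl : ∀ x ∈ D, ∀ b, x ++ [b] ∈ internalPos S → x ++ [b] ∈ D) :
    ∀ n (q : Pos), q.length ≤ n → ∀ p ∈ D, q ∈ internalPos S → p <+: q → q ∈ D := by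
  intro n
  induction n with
  | zero =>
    intro q hq p hpD _ hpq
    have hqnil : q = [] := List.length_eq_zero_iff.mp (Nat.le_zero.mp hq)
    subst hqnil
    have := List.prefix_nil.mp hpq
    rwa [this] at hpD
  | succ n ih =>
    intro q hqlen p hpD hqi hpq
    by_cases hpq' : p = q
    · rwa [hpq'] at hpD
    · have hql : q ≠ [] := by rintro rfl; exact hpq' (List.prefix_nil.mp hpq)
      have hyq : q.dropLast ++ [q.getLast hql] = q := List.dropLast_append_getLast hql
      have hpy : p <+: q.dropLast := prefix_strict_snoc hpq hpq'
      have hyint : q.dropLast ∈ internalPos S :=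
        internal_of_snoc_valid (by rw [hyq]; exact valid_of_mem_internalPos hqi)
      have hyD : q.dropLast ∈ D := by
        refine ih q.dropLast ?_ p hpD hyint hpy
        have : q.length ≤ n + 1 := hqlen
        have h2 : q.dropLast.length = q.length - 1 := List.length_dropLast
        have h3 : 0 < q.length := List.length_pos_iff.mpr hql
        omega
      have := hcl _ hyD (q.getLast hql) (by rw [hyq]; exact hqi)
      rwa [hyq] at this

section Frontier

variable {l r : BTree} {C : Finset Pos} {p : Pos}

theorem union_ne_nil (hC1 : ∀ q ∈ C, q ∈ internalPos (node l r) ∧ q ≠ [])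
    {x : Pos} (hx : x ∈ leafPositions (node l r) ∨ x ∈ C) : x ≠ [] := by
  rcases hx with hx | hx
  · rintro rfl; exact nil_not_mem_leafPositions hx
  · exact (hC1 x hx).2

theorem frontier_child
    (hp : p ∈ internalPos (node l r)) (hpC : p ∉ C)
    (hch : ∀ b, p ++ [b] ∈ internalPos (node l r) → p ++ [b] ∈ C) (b : Bool) :
    p ++ [b] ∈ frontier (node l r) C := by
  rw [mem_frontier]
  constructor
  · by_cases hi : p ++ [b] ∈ internalPos (node l r)
    · exact Or.inr (hch b hi)
    · exact Or.inl (leafPos_of_valid_not_internal (snoc_valid_of_internal hp b) hi)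
  · rw [List.dropLast_concat]; exact hpC

theorem frontier_not_mem_self (hp : p ∈ internalPos (node l r)) (hpC : p ∉ C) :
    p ∉ frontier (node l r) C := by
  rw [mem_frontier]
  rintro ⟨hx, -⟩
  rcases hx with hx | hx
  · exact internal_not_leafPos hp hx
  · exact hpC hx

theorem coalesce_frontier
    (hC1 : ∀ q ∈ C, q ∈ internalPos (node l r) ∧ q ≠ [])
    (hC2 : ∀ q ∈ C, ∀ b, q ++ [b] ∈ internalPos (node l r) → q ++ [b] ∈ C)
    (hp : p ∈ internalPos (node l r)) (hpnil : p ≠ []) (hpC : p ∉ C)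
    (hch : ∀ b, p ++ [b] ∈ internalPos (node l r) → p ++ [b] ∈ C) :
    coalesce (frontier (node l r) C) p = frontier (node l r) (insert p C) := by
  apply Finset.ext
  intro x
  rw [mem_coalesce, mem_frontier, mem_frontier]
  constructor
  · rintro (hxp | ⟨⟨hx1, hx2⟩, hx0, hx1'⟩)
    · -- x = p
      rw [hxp]
      refine ⟨Or.inr (Finset.mem_insert_self _ _), ?_⟩
      rw [Finset.mem_insert]
      rintro (hd | hd)
      · -- dropLast p = p : impossible since p ≠ []
        have := congrArg List.length hd
        have h3 : 0 < p.length := List.length_pos_iff.mpr hpnil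
        rw [List.length_dropLast] at this
        omega
      · -- parent of p coalesced: then p itself would be coalesced
        have hpd : p.dropLast ++ [p.getLast hpnil] = p := List.dropLast_append_getLast hpnil
        have := hC2 _ hd (p.getLast hpnil) (by rw [hpd]; exact hp)
        rw [hpd] at this
        exact hpC this
    · -- x ∈ frontier C, not a child of p
      have hxnil : x ≠ [] := union_ne_nil hC1 hx1
      refine ⟨by rcases hx1 with h | h; exacts [Or.inl h, Or.inr (Finset.mem_insert_of_mem h)], ?_⟩
      rw [Finset.mem_insert]
      rintro (hd | hd)
      · -- dropLast x = p : then x is a child of p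
        have hxd : x.dropLast ++ [x.getLast hxnil] = x := List.dropLast_append_getLast hxnil
        rw [hd] at hxd
        obtain hb | hb := Bool.eq_false_or_eq_true (x.getLast hxnil) <;> rw [hb] at hxd
        · exact hx1' hxd.symm
        · exact hx0 hxd.symm
      · exact hx2 hd
  · rintro ⟨hx1, hx2⟩
    rw [Finset.mem_insert] at hx2
    push_neg at hx2
    by_cases hxp : x = p
    · exact Or.inl hxp
    · right
      have hx1' : x ∈ leafPositions (node l r) ∨ x ∈ C := by
        rcases hx1 with h | h
        · exact Or.inl h
        · rcases Finset.mem_insert.mp h with h' | h'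
          · exact absurd h' hxp
          · exact Or.inr h'
      refine ⟨⟨hx1', hx2.2⟩, ?_, ?_⟩
      · intro hxe; apply hx2.1; rw [hxe, List.dropLast_concat]
      · intro hxe; apply hx2.1; rw [hxe, List.dropLast_concat]

theorem frontier_full
    (hC1 : ∀ q ∈ C, q ∈ internalPos (node l r) ∧ q ≠ [])
    (hfull : ∀ q ∈ internalPos (node l r), q ≠ [] → q ∈ C) :
    frontier (node l r) C = rootConfig := by
  apply Finset.ext
  intro x
  rw [mem_frontier]
  constructor
  · rintro ⟨hx1, hx2⟩
    have hxnil : x ≠ [] := union_ne_nil hC1 hx1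
    have hxv : isValidPos (node l r) x := by
      rcases hx1 with h | h
      · exact (mem_leafPositions_iff.mp h).1
      · exact valid_of_mem_internalPos (hC1 x h).1
    have hxd : x.dropLast ++ [x.getLast hxnil] = x := List.dropLast_append_getLast hxnil
    have hdnil : x.dropLast = [] := by
      by_contra hdnil
      apply hx2
      apply hfull _ _ hdnil
      exact internal_of_snoc_valid (by rw [hxd]; exact hxv)
    rw [← hxd, hdnil, List.nil_append]
    obtain hb | hb := Bool.eq_false_or_eq_true (x.getLast hxnil) <;> rw [hb] <;>
      simp [rootConfig]
  · intro hx
    have hx' : x = [false] ∨ x = [true] := by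
      simpa [rootConfig] using hx
    have hval : ∀ b : Bool, isValidPos (node l r) [b] := by
      intro b; cases b <;> exact isValidPos_nil _
    have key : ∀ b : Bool, ([b] ∈ leafPositions (node l r) ∨ [b] ∈ C) ∧
        ([b] : Pos).dropLast ∉ C := by
      intro b
      constructor
      · by_cases hi : [b] ∈ internalPos (node l r)
        · exact Or.inr (hfull _ hi (by simp))
        · exact Or.inl (leafPos_of_valid_not_internal (hval _) hi)
      · simp only [List.dropLast_singleton]
        intro h
        exact (hC1 _ h).2 rfl
    rcases hx' with rfl | rfl
    · exact key false
    · exact key true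

theorem frontier_full_inv
    (hC1 : ∀ q ∈ C, q ∈ internalPos (node l r) ∧ q ≠ [])
    (h : frontier (node l r) C = rootConfig) :
    ∀ q ∈ internalPos (node l r), q ≠ [] → q ∈ C := by
  classical
  by_contra hcon
  push_neg at hcon
  obtain ⟨q0, hq0i, hq0n, hq0C⟩ := hcon
  set D : Finset Pos := (internalPos (node l r)).filter (fun q => q ≠ [] ∧ q ∉ C) with hD
  have hDne : D.Nonempty := ⟨q0, Finset.mem_filter.mpr ⟨hq0i, hq0n, hq0C⟩⟩
  obtain ⟨m, hmD, hmax⟩ := Finset.exists_max_image D List.length hDne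
  obtain ⟨hmi, hmn, hmC⟩ := Finset.mem_filter.mp hmD
  have hcf : m ++ [false] ∈ frontier (node l r) C := by
    rw [mem_frontier]
    constructor
    · by_cases hi : m ++ [false] ∈ internalPos (node l r)
      · by_cases hic : m ++ [false] ∈ C
        · exact Or.inr hic
        · exfalso
          have : m ++ [false] ∈ D := Finset.mem_filter.mpr ⟨hi, by simp, hic⟩
          have := hmax _ this
          simp at this
      · exact Or.inl (leafPos_of_valid_not_internal (snoc_valid_of_internal hmi false) hi)
    · rw [List.dropLast_concat]; exact hmC
  rw [h] at hcf
  have : m ++ [false] = [false] ∨ m ++ [false] = [true] := by simpa [rootConfig] using hcf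
  have hmlen : 0 < m.length := List.length_pos_iff.mpr hmn
  rcases this with h' | h' <;>
    · have h2 : m.length + 1 = 1 := by simpa using congrArg List.length h'
      omega

end Frontier

end BTree


namespace BTree

theorem scanl_eq_cons {α β : Type} (f : β → α → β) (b : β) (l : List α) :
    ∃ t, List.scanl f b l = b :: t := by
  cases l with
  | nil => exact ⟨[], rfl⟩
  | cons a l => exact ⟨List.scanl f (f b a) l, List.scanl_cons⟩

theorem head?_scanl {α β : Type} (f : β → α → β) (b : β) (l : List α) :
    (List.scanl f b l).head? = some b := by
  obtain ⟨t, ht⟩ := scanl_eq_cons f b l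
  rw [ht]; rfl

theorem main1 {l r : BTree} :
    ∀ (M : List Pos) (C : Finset Pos),
    (∀ q ∈ C, q ∈ internalPos (node l r) ∧ q ≠ []) →
    (∀ q ∈ C, ∀ b, q ++ [b] ∈ internalPos (node l r) → q ++ [b] ∈ C) →
    M.Nodup →
    (∀ x ∈ M, x ∈ internalPos (node l r) ∧ x ≠ [] ∧ x ∉ C) →
    (∀ i : Fin M.length, ∀ b, M.get i ++ [b] ∈ internalPos (node l r) →
        M.get i ++ [b] ∈ C ∪ (M.take i).toFinset) →
    IsConfig (node l r) (frontier (node l r) C) →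
    (∀ A ∈ List.scanl coalesce (frontier (node l r) C) M, IsConfig (node l r) A) ∧
    (List.scanl coalesce (frontier (node l r) C) M).Chain' (Covers (node l r)) ∧
    (List.scanl coalesce (frontier (node l r) C) M).getLast? =
      some (frontier (node l r) (C ∪ M.toFinset)) ∧
    List.zipWith delta (List.scanl coalesce (frontier (node l r) C) M)
      (List.scanl coalesce (frontier (node l r) C) M).tail = M := by
  intro M
  induction M with
  | nil =>
    intro C hC1 hC2 hnd hM hMc hcfg
    refine ⟨?_, ?_, ?_, ?_⟩
    · intro A hA
      simp only [List.scanl_nil, List.mem_singleton] at hA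
      rwa [hA]
    · exact List.isChain_singleton _
    · simp only [List.scanl_nil, List.getLast?_singleton, List.toFinset_nil,
        Finset.union_empty]
    · simp
  | cons p M' ih =>
    intro C hC1 hC2 hnd hM hMc hcfg
    obtain ⟨hpint, hpnil, hpC⟩ := hM p List.mem_cons_self
    have hch : ∀ b, p ++ [b] ∈ internalPos (node l r) → p ++ [b] ∈ C := by
      intro b hb
      have := hMc ⟨0, by simp⟩ b (by simpa using hb)
      simpa using this
    have h0 : p ++ [false] ∈ frontier (node l r) C := frontier_child hpint hpC hch false
    have h1 : p ++ [true] ∈ frontier (node l r) C := frontier_child hpint hpC hch true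
    have hpnotin : p ∉ frontier (node l r) C := frontier_not_mem_self hpint hpC
    have hcover : Covers (node l r) (frontier (node l r) C)
        (coalesce (frontier (node l r) C) p) := coalesce_covers hcfg hpnil h0 h1
    have heq : coalesce (frontier (node l r) C) p = frontier (node l r) (insert p C) :=
      coalesce_frontier hC1 hC2 hpint hpnil hpC hch
    have hcfg' : IsConfig (node l r) (frontier (node l r) (insert p C)) := by
      rw [← heq]; exact isConfig_coalesce hcfg hpnil h0 h1
    -- hypotheses for the inductive step
    have hC1' : ∀ q ∈ insert p C, q ∈ internalPos (node l r) ∧ q ≠ [] := by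
      intro q hq
      rcases Finset.mem_insert.mp hq with rfl | hq
      · exact ⟨hpint, hpnil⟩
      · exact hC1 q hq
    have hC2' : ∀ q ∈ insert p C, ∀ b,
        q ++ [b] ∈ internalPos (node l r) → q ++ [b] ∈ insert p C := by
      intro q hq b hb
      rcases Finset.mem_insert.mp hq with rfl | hq
      · exact Finset.mem_insert_of_mem (hch b hb)
      · exact Finset.mem_insert_of_mem (hC2 q hq b hb)
    have hnd' : M'.Nodup := (List.nodup_cons.mp hnd).2
    have hM' : ∀ x ∈ M', x ∈ internalPos (node l r) ∧ x ≠ [] ∧ x ∉ insert p C := by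
      intro x hx
      obtain ⟨h1', h2', h3'⟩ := hM x (List.mem_cons_of_mem _ hx)
      refine ⟨h1', h2', ?_⟩
      rw [Finset.mem_insert]
      rintro (rfl | hxC)
      · exact (List.nodup_cons.mp hnd).1 hx
      · exact h3' hxC
    have hMc' : ∀ i : Fin M'.length, ∀ b,
        M'.get i ++ [b] ∈ internalPos (node l r) →
        M'.get i ++ [b] ∈ insert p C ∪ (M'.take i).toFinset := by
      intro i b hb
      have hi1 : (i : ℕ) + 1 < (p :: M').length := by
        simpa using Nat.succ_lt_succ i.isLt
      have hget : (p :: M').get ⟨(i : ℕ) + 1, hi1⟩ = M'.get i := by simp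
      have := hMc ⟨(i : ℕ) + 1, hi1⟩ b (by rw [hget]; exact hb)
      rw [hget] at this
      have htake : ((p :: M').take ((i : ℕ) + 1)).toFinset =
          insert p (M'.take i).toFinset := by
        rw [List.take_succ_cons, List.toFinset_cons]
      rw [htake] at this
      rw [Finset.union_insert] at this
      rw [Finset.insert_union]
      exact this
    obtain ⟨ihcfg, ihchain, ihlast, ihdelta⟩ :=
      ih (insert p C) hC1' hC2' hnd' hM' hMc' hcfg'
    -- assemble
    rw [List.scanl_cons, heq]
    obtain ⟨t, ht⟩ := scanl_eq_cons coalesce (frontier (node l r) (insert p C)) M'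
    refine ⟨?_, ?_, ?_, ?_⟩
    · intro A hA
      rcases List.mem_cons.mp hA with rfl | hA
      · exact hcfg
      · exact ihcfg A hA
    · simp only [List.Chain']
      rw [List.isChain_cons]
      constructor
      · intro y hy
        rw [head?_scanl] at hy
        have hy' : y = frontier (node l r) (insert p C) := by simpa using hy.symm
        rw [hy', ← heq]
        exact hcover
      · exact ihchain
    · rw [ht, List.getLast?_cons_cons, ← ht, ihlast]
      congr 1
      rw [List.toFinset_cons, Finset.union_insert, Finset.insert_union]
    · simp only [List.tail_cons]
      rw [ht, List.zipWith_cons_cons]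
      congr 1
      · rw [← heq]; exact delta_coalesce hpnotin
      · rw [ht] at ihdelta
        simpa using ihdelta

end BTree


namespace BTree

theorem scanl_reconstruct {S : BTree} :
    ∀ (L : List (Finset Pos)) (A : Finset Pos),
    (A :: L).Chain' (Covers S) →
    List.scanl coalesce A (List.zipWith delta (A :: L) L) = A :: L := by
  intro L
  induction L with
  | nil => intro A _; simp
  | cons B L' ih =>
    intro A hch
    simp only [List.Chain', List.isChain_cons_cons] at hch
    obtain ⟨hAB, hch'⟩ := hch
    obtain ⟨hco, -, -, -, -⟩ := coalesce_delta_of_covers hAB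
    rw [List.zipWith_cons_cons, List.scanl_cons, hco, ih B hch']

theorem main2 {l r : BTree} :
    ∀ (L : List (Finset Pos)) (C : Finset Pos),
    (∀ q ∈ C, q ∈ internalPos (node l r) ∧ q ≠ []) →
    (∀ q ∈ C, ∀ b, q ++ [b] ∈ internalPos (node l r) → q ++ [b] ∈ C) →
    (frontier (node l r) C :: L).Chain' (Covers (node l r)) →
    (∀ x ∈ List.zipWith delta (frontier (node l r) C :: L) L,
        x ∈ internalPos (node l r) ∧ x ≠ [] ∧ x ∉ C) ∧
    (List.zipWith delta (frontier (node l r) C :: L) L).Nodup ∧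
    (∀ i : Fin (List.zipWith delta (frontier (node l r) C :: L) L).length, ∀ b,
        (List.zipWith delta (frontier (node l r) C :: L) L).get i ++ [b] ∈
          internalPos (node l r) →
        (List.zipWith delta (frontier (node l r) C :: L) L).get i ++ [b] ∈
          C ∪ ((List.zipWith delta (frontier (node l r) C :: L) L).take i).toFinset) ∧
    (frontier (node l r) C :: L).getLast? =
      some (frontier (node l r)
        (C ∪ (List.zipWith delta (frontier (node l r) C :: L) L).toFinset)) := by
  intro L
  induction L with
  | nil =>
    intro C _ _ _
    refine ⟨by simp, by simp, ?_, by simp⟩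
    intro i
    exact absurd i.isLt (by simp)
  | cons B L' ih =>
    intro C hC1 hC2 hch
    simp only [List.Chain', List.isChain_cons_cons] at hch
    obtain ⟨hAB, hch'⟩ := hch
    obtain ⟨hco, hdnil, hd0, hd1, hdF⟩ := coalesce_delta_of_covers hAB
    set d : Pos := delta (frontier (node l r) C) B with hd
    have hFcfg : IsConfig (node l r) (frontier (node l r) C) := hAB.1
    have hdint : d ∈ internalPos (node l r) :=
      internal_of_snoc_valid (hFcfg.1 _ hd0).1
    have hdC : d ∉ C := by
      have := (mem_frontier.mp hd0).2
      rwa [List.dropLast_concat] at this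
    have hch_closed : ∀ b, d ++ [b] ∈ internalPos (node l r) → d ++ [b] ∈ C := by
      intro b hb
      have hmem : d ++ [b] ∈ frontier (node l r) C := by cases b; exacts [hd0, hd1]
      rcases (mem_frontier.mp hmem).1 with h | h
      · exact absurd h (internal_not_leafPos hb)
      · exact h
    have heq : B = frontier (node l r) (insert d C) := by
      rw [← hco, coalesce_frontier hC1 hC2 hdint hdnil hdC hch_closed]
    have hC1' : ∀ q ∈ insert d C, q ∈ internalPos (node l r) ∧ q ≠ [] := by
      intro q hq
      rcases Finset.mem_insert.mp hq with rfl | hq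
      · exact ⟨hdint, hdnil⟩
      · exact hC1 q hq
    have hC2' : ∀ q ∈ insert d C, ∀ b,
        q ++ [b] ∈ internalPos (node l r) → q ++ [b] ∈ insert d C := by
      intro q hq b hb
      rcases Finset.mem_insert.mp hq with rfl | hq
      · exact Finset.mem_insert_of_mem (hch_closed b hb)
      · exact Finset.mem_insert_of_mem (hC2 q hq b hb)
    rw [heq] at hch'
    obtain ⟨ih1, ih2, ih3, ih4⟩ := ih (insert d C) hC1' hC2' hch'
    rw [← heq] at ih1 ih2 ih3 ih4
    rw [List.zipWith_cons_cons, ← hd]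
    set M' : List Pos := List.zipWith delta (B :: L') L' with hM'
    refine ⟨?_, ?_, ?_, ?_⟩
    · intro x hx
      rcases List.mem_cons.mp hx with rfl | hx
      · exact ⟨hdint, hdnil, hdC⟩
      · obtain ⟨h1', h2', h3'⟩ := ih1 x hx
        exact ⟨h1', h2', fun h => h3' (Finset.mem_insert_of_mem h)⟩
    · rw [List.nodup_cons]
      refine ⟨?_, ih2⟩
      intro hdM'
      exact (ih1 d hdM').2.2 (Finset.mem_insert_self _ _)
    · intro i b hb
      rcases i with ⟨iv, hiv⟩
      cases iv with
      | zero =>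
        have hget : (d :: M').get ⟨0, hiv⟩ = d := rfl
        rw [hget] at hb ⊢
        exact Finset.mem_union_left _ (hch_closed b hb)
      | succ k =>
        have hk : k < M'.length := by simpa using hiv
        have hget : (d :: M').get ⟨k + 1, hiv⟩ = M'.get ⟨k, hk⟩ := rfl
        rw [hget] at hb ⊢
        have := ih3 ⟨k, hk⟩ b hb
        rw [List.take_succ_cons, List.toFinset_cons, Finset.union_insert,
          ← Finset.insert_union]
        exact this
    · rw [List.getLast?_cons_cons, ih4]
      congr 1
      rw [List.toFinset_cons, Finset.union_insert, Finset.insert_union]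

end BTree


namespace BTree

theorem mem_take_of_lt {α : Type} [DecidableEq α] {l : List α} {j n : ℕ}
    (hj : j < l.length) (hjn : j < n) : l[j] ∈ l.take n := by
  rw [List.mem_take_iff_getElem]
  exact ⟨j, by omega, rfl⟩

theorem exists_idx_of_mem_take {α : Type} [DecidableEq α] {l : List α} {x : α} {n : ℕ}
    (h : x ∈ l.take n) : ∃ j, ∃ _ : j < l.length, j < n ∧ l[j] = x := by
  rw [List.mem_take_iff_getElem] at h
  obtain ⟨j, hj, he⟩ := h
  exact ⟨j, by omega, by omega, he⟩

/-- The order condition of a labeled history holds for `M ++ [[]]` when `M`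
satisfies the child-closedness condition. -/
theorem order_condition {l r : BTree} {M : List Pos}
    (h1 : ∀ x ∈ M, x ∈ internalPos (node l r) ∧ x ≠ [] ∧ x ∉ (∅ : Finset Pos))
    (hnd : M.Nodup)
    (h3 : ∀ i : Fin M.length, ∀ b, M.get i ++ [b] ∈ internalPos (node l r) →
        M.get i ++ [b] ∈ (∅ : Finset Pos) ∪ (M.take i).toFinset) :
    ∀ i j : Fin (M ++ [([] : Pos)] : List Pos).length,
      (M ++ [([] : Pos)]).get i <+: (M ++ [([] : Pos)]).get j → (j : ℕ) ≤ (i : ℕ) := by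
  intro i j hpre
  rw [List.get_eq_getElem] at hpre
  rw [List.get_eq_getElem] at hpre
  have hi : (i : ℕ) < M.length + 1 := by simpa using i.isLt
  have hj : (j : ℕ) < M.length + 1 := by simpa using j.isLt
  by_cases hii : (i : ℕ) = M.length
  · -- last element: everything is ≤ it
    omega
  · have hi' : (i : ℕ) < M.length := by omega
    have hgi : (M ++ [([] : Pos)])[(i : ℕ)] = M[(i : ℕ)] := List.getElem_append_left hi'
    by_cases hjj : (j : ℕ) = M.length
    · -- get j = [], so get i <+: [] forces get i = [], contradiction
      exfalso
      have hgj : (M ++ [([] : Pos)])[(j : ℕ)]'(j.isLt) = ([] : Pos) := by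
        rw [List.getElem_append_right] <;> simp [hjj]
      rw [hgi, hgj] at hpre
      exact (h1 _ (List.getElem_mem hi')).2.1 (List.prefix_nil.mp hpre)
    · have hj' : (j : ℕ) < M.length := by omega
      have hgj : (M ++ [([] : Pos)])[(j : ℕ)] = M[(j : ℕ)] := List.getElem_append_left hj'
      rw [hgi, hgj] at hpre
      by_cases hij : (i : ℕ) = (j : ℕ)
      · omega
      · -- strictly comparable distinct internal nodes
        by_contra hcon
        push_neg at hcon
        have hij' : (i : ℕ) < (j : ℕ) := by omega
        -- descendant-closedness of the first j coalesced nodes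
        set D : Finset Pos := (M.take (j : ℕ)).toFinset with hD
        have hcl : ∀ x ∈ D, ∀ b, x ++ [b] ∈ internalPos (node l r) → x ++ [b] ∈ D := by
          intro x hx b hb
          rw [hD, List.mem_toFinset] at hx
          obtain ⟨k, hk, hkj, hke⟩ := exists_idx_of_mem_take hx
          have := h3 ⟨k, hk⟩ b (by rw [List.get_eq_getElem]; simpa [hke] using hb)
          rw [List.get_eq_getElem] at this
          rcases Finset.mem_union.mp this with h' | h'
          · exact absurd h' (Finset.notMem_empty _)
          · rw [List.mem_toFinset] at h'
            rw [hD, List.mem_toFinset]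
            obtain ⟨m, hm, hmk, hme⟩ := exists_idx_of_mem_take h'
            have hmk' : m < k := by simpa using hmk
            rw [hke] at hme
            rw [← hme]
            exact mem_take_of_lt hm (by omega)
        have hpD : M[(i : ℕ)] ∈ D := by
          rw [hD, List.mem_toFinset]
          exact mem_take_of_lt hi' hij'
        have hqint : M[(j : ℕ)] ∈ internalPos (node l r) :=
          (h1 _ (List.getElem_mem hj')).1
        have hqD : M[(j : ℕ)] ∈ D :=
          descend_closed hcl (M[(j : ℕ)]).length _ le_rfl _ hpD hqint hpre
        rw [hD, List.mem_toFinset] at hqD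
        obtain ⟨k, hk, hkj, hke⟩ := exists_idx_of_mem_take hqD
        have : k = (j : ℕ) := by
          have := (List.Nodup.get_inj_iff hnd (i := ⟨k, hk⟩) (j := ⟨(j : ℕ), hj'⟩)).mp
            (by simpa using hke)
          simpa using this
        omega

/-- Converting a maximal chain to a labeled history. -/
theorem chain_to_hist {l r : BTree} {L : List (Finset Pos)}
    (hhead : L.head? = some (leafPositions (node l r)))
    (hlast : L.getLast? = some rootConfig)
    (hchain : L.Chain' (Covers (node l r))) :
    IsLabHist (node l r) (List.zipWith delta L L.tail ++ [([] : Pos)]) := by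
  cases L with
  | nil => simp at hhead
  | cons A L' =>
    have hA : A = leafPositions (node l r) := by simpa using hhead
    subst hA
    rw [← frontier_empty (node l r)] at hchain hlast ⊢
    have hC1 : ∀ q ∈ (∅ : Finset Pos), q ∈ internalPos (node l r) ∧ q ≠ [] := by simp
    have hC2 : ∀ q ∈ (∅ : Finset Pos), ∀ b,
        q ++ [b] ∈ internalPos (node l r) → q ++ [b] ∈ (∅ : Finset Pos) := by simp
    obtain ⟨h1, h2, h3, h4⟩ := main2 L' ∅ hC1 hC2 hchain
    simp only [List.tail_cons]
    set M : List Pos := List.zipWith delta (frontier (node l r) ∅ :: L') L' with hM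
    -- completeness
    rw [hlast] at h4
    have hrc : frontier (node l r) (∅ ∪ M.toFinset) = rootConfig := by
      injection h4.symm
    have hMC1 : ∀ q ∈ (∅ ∪ M.toFinset : Finset Pos),
        q ∈ internalPos (node l r) ∧ q ≠ [] := by
      intro q hq
      rcases Finset.mem_union.mp hq with h' | h'
      · exact absurd h' (Finset.notMem_empty _)
      · rw [List.mem_toFinset] at h'
        exact ⟨(h1 q h').1, (h1 q h').2.1⟩
    have hfull := frontier_full_inv hMC1 hrc
    refine ⟨?_, ?_, ?_⟩
    · rw [List.nodup_append]
      refine ⟨h2, List.nodup_singleton _, ?_⟩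
      intro x hx y hx'
      rw [List.mem_singleton] at hx'
      exact hx' ▸ (h1 x hx).2.1
    · intro p
      rw [List.mem_append, List.mem_singleton]
      constructor
      · rintro (hp | rfl)
        · exact (h1 p hp).1
        · exact nil_mem_internalPos
      · intro hp
        by_cases hpnil : p = []
        · exact Or.inr hpnil
        · left
          have := hfull p hp hpnil
          rcases Finset.mem_union.mp this with h' | h'
          · exact absurd h' (Finset.notMem_empty _)
          · exact List.mem_toFinset.mp h'
    · exact order_condition h1 h2 h3

/-- Converting a labeled history to a maximal chain. -/
theorem hist_to_chain {l r : BTree} {L : List Pos} (hL : IsLabHist (node l r) L) :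
    (∀ A ∈ List.scanl coalesce (leafPositions (node l r)) L.dropLast,
        IsConfig (node l r) A) ∧
    (List.scanl coalesce (leafPositions (node l r)) L.dropLast).head? =
      some (leafPositions (node l r)) ∧
    (List.scanl coalesce (leafPositions (node l r)) L.dropLast).getLast? =
      some rootConfig ∧
    (List.scanl coalesce (leafPositions (node l r)) L.dropLast).Chain'
      (Covers (node l r)) ∧
    List.zipWith delta (List.scanl coalesce (leafPositions (node l r)) L.dropLast)
      (List.scanl coalesce (leafPositions (node l r)) L.dropLast).tail = L.dropLast ∧
    L.dropLast ++ [([] : Pos)] = L := by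
  obtain ⟨hnd, hmem, hord⟩ := hL
  have hnil_mem : ([] : Pos) ∈ L := (hmem []).mpr nil_mem_internalPos
  have hLne : L ≠ [] := List.ne_nil_of_mem hnil_mem
  have hLpos : 0 < L.length := List.length_pos_iff.mpr hLne
  -- the root is the last element
  obtain ⟨i0, hi0lt, hi0⟩ := List.mem_iff_getElem.mp hnil_mem
  have hmax : ∀ j : Fin L.length, (j : ℕ) ≤ i0 := by
    intro j
    refine hord ⟨i0, hi0lt⟩ j ?_
    rw [List.get_eq_getElem, hi0]
    exact List.nil_prefix
  have hi0v : i0 = L.length - 1 := by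
    have := hmax ⟨L.length - 1, by omega⟩
    simp at this
    omega
  have hgetLast : L.getLast hLne = [] := by
    rw [List.getLast_eq_getElem, ← hi0]
    congr 1
    omega
  have hrep : L.dropLast ++ [([] : Pos)] = L := by
    rw [← hgetLast]
    exact List.dropLast_append_getLast hLne
  set M : List Pos := L.dropLast with hMdef
  have hMlen : M.length = L.length - 1 := List.length_dropLast
  have hndM : M.Nodup ∧ ([] : Pos) ∉ M := by
    rw [← hrep, List.nodup_append] at hnd
    exact ⟨hnd.1, fun h => hnd.2.2 _ h _ (List.mem_singleton.mpr rfl) rfl⟩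
  have hMmem : ∀ x ∈ M, x ∈ internalPos (node l r) ∧ x ≠ [] ∧ x ∉ (∅ : Finset Pos) := by
    intro x hx
    refine ⟨(hmem x).mp ((List.dropLast_sublist L).subset hx), ?_, Finset.notMem_empty x⟩
    rintro rfl
    exact hndM.2 hx
  have hMc : ∀ i : Fin M.length, ∀ b,
      M.get i ++ [b] ∈ internalPos (node l r) →
      M.get i ++ [b] ∈ (∅ : Finset Pos) ∪ (M.take i).toFinset := by
    intro i b hb
    have hiL : (i : ℕ) < L.length := by have := i.isLt; omega
    have hgi : M.get i = L[(i : ℕ)] := by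
      rw [List.get_eq_getElem]
      exact List.getElem_dropLast i.isLt
    obtain ⟨j, hjlt, hje⟩ := List.mem_iff_getElem.mp ((hmem _).mpr hb)
    have hji : j ≤ (i : ℕ) := by
      have := hord ⟨(i : ℕ), hiL⟩ ⟨j, hjlt⟩ ?_
      · exact this
      · rw [List.get_eq_getElem, List.get_eq_getElem, hje, ← hgi]
        exact List.prefix_append _ _
    have hjne : j ≠ (i : ℕ) := by
      intro h
      subst h
      have hcomb : M.get i = M.get i ++ [b] := hgi.trans hje
      have := congrArg List.length hcomb
      simp at this
    have hjM : j < M.length := by omega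
    have hgj : M[j] = L[j] := List.getElem_dropLast hjM
    apply Finset.mem_union_right
    rw [List.mem_toFinset, ← hje, ← hgj]
    exact mem_take_of_lt hjM (by omega)
  have hcfg0 : IsConfig (node l r) (frontier (node l r) ∅) := by
    rw [frontier_empty]; exact isConfig_leafPositions l r
  have hC1 : ∀ q ∈ (∅ : Finset Pos), q ∈ internalPos (node l r) ∧ q ≠ [] := by simp
  have hC2 : ∀ q ∈ (∅ : Finset Pos), ∀ b,
      q ++ [b] ∈ internalPos (node l r) → q ++ [b] ∈ (∅ : Finset Pos) := by simp
  obtain ⟨m1, m2, m3, m4⟩ := main1 M ∅ hC1 hC2 hndM.1 hMmem hMc hcfg0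
  rw [frontier_empty] at m1 m2 m3 m4
  refine ⟨m1, ?_, ?_, m2, m4, hrep⟩
  · exact head?_scanl _ _ _
  · rw [m3]
    congr 1
    apply frontier_full
    · intro q hq
      rcases Finset.mem_union.mp hq with h' | h'
      · exact absurd h' (Finset.notMem_empty _)
      · rw [List.mem_toFinset] at h'
        exact ⟨(hMmem q h').1, (hMmem q h').2.1⟩
    · intro q hqi hqn
      apply Finset.mem_union_right
      rw [List.mem_toFinset]
      have : q ∈ L := (hmem q).mpr hqi
      rw [← hrep, List.mem_append, List.mem_singleton] at this
      rcases this with h' | h'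
      · exact h'
      · exact absurd h' hqn

end BTree


open BTree

/-- The maximal chains of the lattice of root ancestral configurations of a binary
rooted tree (saturated chains from the all-leaves configuration to the
two-children-of-the-root configuration) are in bijection with the labeled
histories of the tree (linear extensions of the poset of internal nodes). -/
theorem maximal_chains_equiv_labeled_histories (l r : BTree) :
    Nonempty
      ({L : List (Finset Pos) //
          (∀ A ∈ L, IsConfig (node l r) A) ∧
          L.head? = some (leafPositions (node l r)) ∧
          L.getLast? = some rootConfig ∧
          L.Chain' (Covers (node l r))} ≃
        {L : List Pos // IsLabHist (node l r) L}) := by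
  constructor
  exact
    { toFun := fun x =>
        ⟨List.zipWith delta x.1 x.1.tail ++ [([] : Pos)],
          chain_to_hist x.2.2.1 x.2.2.2.1 x.2.2.2.2⟩
      invFun := fun y =>
        ⟨List.scanl coalesce (leafPositions (node l r)) y.1.dropLast,
          (hist_to_chain y.2).1, (hist_to_chain y.2).2.1,
          (hist_to_chain y.2).2.2.1, (hist_to_chain y.2).2.2.2.1⟩
      left_inv := by
        rintro ⟨L, hcfg, hhead, hlast, hchain⟩
        apply Subtype.ext
        simp only
        rw [List.dropLast_concat]
        cases L with
        | nil => simp at hhead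
        | cons A L' =>
          have hA : A = leafPositions (node l r) := by simpa using hhead
          subst hA
          simp only [List.tail_cons]
          exact scanl_reconstruct L' _ hchain
      right_inv := by
        rintro ⟨L, hL⟩
        apply Subtype.ext
        simp only
        rw [(hist_to_chain hL).2.2.2.2.1]
        exact (hist_to_chain hL).2.2.2.2.2 }
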